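/- Under assumptions (A1)-(A3), the dual-update block of the augmented Lagrangian satisfies, at every iteration t: L({x_k^{t+1}}, z^{t+1}, {y_k^{t+1}}) − L({x_k^{t+1}}, z^{t+1}, {y_k^t}) = Σ_{k=1}^K (1/ρ_k) Σ_{j∈N_k} ‖y_{kj}^{t+1} − y_{kj}^t‖², and this is at most Σ_{k=1}^K (L_k²(T_k+1)/ρ_k) Σ_{j∈N_k} Σ_{d=0}^{T_k} ‖z_j^{t+1−d} − z_j^{t−d}‖². -/

import Mathlib

open Filter Topology RealInnerProductSpace

noncomputable section

/-- Zero-padded restriction of a vector of nodal variables to a neighborhood: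
coordinates outside the neighborhood are set to zero. -/
def restr {K : ℕ} (Nk : Finset (Fin K)) (v : Fin K → ℝ) : EuclideanSpace ℝ (Fin K) :=
  WithLp.toLp 2 (fun j => if j ∈ Nk then v j else 0)

/-- The setting of the asynchronous proximal ADMM: network data, assumptions
(A1)-(A2), and the algorithmic update equations (i)-(iii) together with the
delay bounds and the update-frequency condition. -/
structure ProxADMM (K : ℕ) where
  /-- neighborhoods, `j ∈ Nb k` means `j ∈ N_k` -/
  Nb : Fin K → Finset (Fin K)
  self_mem : ∀ k, k ∈ Nb k
  symm : ∀ k j, j ∈ Nb k ↔ k ∈ Nb j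
  /-- local cost of node `k`, as a function of the zero-padded neighborhood variables -/
  g : Fin K → EuclideanSpace ℝ (Fin K) → ℝ
  g_local : ∀ k v w, (∀ j ∈ Nb k, v j = w j) → g k v = g k w
  /-- the Lipschitz constants of (A1) -/
  L : Fin K → ℝ
  L_pos : ∀ k, 0 < L k
  g_diff : ∀ k, Differentiable ℝ (g k)
  /-- (A1): the gradient of `g k` is `L k`-Lipschitz -/
  g_grad_lip : ∀ k v w, ‖gradient (g k) v - gradient (g k) w‖ ≤ L k * ‖v - w‖
  /-- the convex nonsmooth part -/
  h : Fin K → ℝ → ℝ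
  h_convex : ∀ k, ConvexOn ℝ Set.univ (h k)
  /-- the constraint sets -/
  Xs : Fin K → Set ℝ
  Xs_nonempty : ∀ k, (Xs k).Nonempty
  Xs_compact : ∀ k, IsCompact (Xs k)
  Xs_convex : ∀ k, Convex ℝ (Xs k)
  /-- (A2): `g k` is bounded below over the constraint set -/
  g_bddBelow : ∀ k, ∃ b, ∀ v : Fin K → ℝ, (∀ j, v j ∈ Xs j) → b ≤ g k (restr (Nb k) v)
  /-- penalty parameters -/
  ρ : Fin K → ℝ
  ρ_pos : ∀ k, 0 < ρ k
  /-- update frequencies `f_k` -/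
  freq : Fin K → ℝ
  freq_pos : ∀ k, 0 < freq k
  freq_le_one : ∀ k, freq k ≤ 1
  /-- maximum delays `T_k` -/
  Td : Fin K → ℕ
  /-- updating sets `S^t` -/
  Sset : ℕ → Finset (Fin K)
  /-- delayed index: `τ t k = [t+1]_k` -/
  τ : ℕ → Fin K → ℕ
  τ_le : ∀ t k, τ t k ≤ t + 1
  τ_ge : ∀ t k, t + 1 ≤ τ t k + Td k
  /-- iterates -/
  x : ℕ → Fin K → Fin K → ℝ
  z : ℕ → Fin K → ℝ
  y : ℕ → Fin K → Fin K → ℝ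
  z_init_mem : ∀ j, z 0 j ∈ Xs j
  /-- (i): feasibility of the `z`-update -/
  z_update_mem : ∀ t j, j ∈ Sset t → z (t + 1) j ∈ Xs j
  /-- (i): for `j ∈ S^t`, `z_j^{t+1}` minimizes the `j`-th block over `X_j` -/
  z_update_min : ∀ t j, j ∈ Sset t → IsMinOn
      (fun w => h j w + ∑ k ∈ Nb j, (y t k j * (x t k j - w) + ρ k / 2 * (x t k j - w) ^ 2))
      (Xs j) (z (t + 1) j)
  /-- (i): non-updating nodes keep their old value -/
  z_noupdate : ∀ t j, j ∉ Sset t → z (t + 1) j = z t j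
  /-- (ii): proximal (linearized) `x`-update with delayed gradient -/
  x_update : ∀ t k, ∀ j ∈ Nb k,
      x (t + 1) k j = z (t + 1) j
        - (1 / ρ k) * (gradient (g k) (restr (Nb k) (z (τ t k))) j + y t k j)
  /-- (iii): dual update -/
  y_update : ∀ t k, ∀ j ∈ Nb k,
      y (t + 1) k j = y t k j + ρ k * (x (t + 1) k j - z (t + 1) j)
  /-- in any window of `T` consecutive iterations node `k` updates at least `f_k T` times -/
  update_freq : ∀ k (t₀ T : ℕ),
      freq k * T ≤ ((Finset.Ico t₀ (t₀ + T)).filter (fun t => k ∈ Sset t)).card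

/-- The augmented Lagrangian. -/
def ProxADMM.Lag {K : ℕ} (P : ProxADMM K) (xx : Fin K → Fin K → ℝ) (zz : Fin K → ℝ)
    (yy : Fin K → Fin K → ℝ) : ℝ :=
  ∑ k, (P.g k (restr (P.Nb k) (xx k)) + P.h k (zz k)
    + ∑ j ∈ P.Nb k, (yy k j * (xx k j - zz j) + P.ρ k / 2 * (xx k j - zz j) ^ 2))

end


lemma ProxADMM.y_formula {K : ℕ} (P : ProxADMM K) (t : ℕ) (k j : Fin K) (hj : j ∈ P.Nb k) :
    P.y (t + 1) k j = - gradient (P.g k) (restr (P.Nb k) (P.z (P.τ t k))) j := by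
  have hρ : P.ρ k ≠ 0 := (P.ρ_pos k).ne'
  rw [P.y_update t k j hj, P.x_update t k j hj]
  field_simp
  ring

lemma sum_Ico_telescope (f : ℕ → ℝ) {m M : ℕ} (h : m ≤ M) :
    ∑ s ∈ Finset.Ico m M, (f (s + 1) - f s) = f M - f m := by
  rw [Finset.sum_Ico_eq_sum_range]
  have h2 := Finset.sum_range_sub (fun i => f (m + i)) (M - m)
  have h3 : m + (M - m) = M := Nat.add_sub_cancel' h
  simp only [← Nat.add_assoc] at h2 ⊢
  rw [h2, h3, Nat.add_zero]

/-- Dual-update block of the augmented Lagrangian (asynchronous proximal ADMM,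
assumptions (A1)-(A3)): the change due to the dual update equals
`Σ_k (1/ρ_k) Σ_{j∈N_k} ‖y_{kj}^{t+1} - y_{kj}^t‖²`, which is bounded by the
delayed `z`-differences. -/
theorem prox_admm_dual_block_bound {K : ℕ} (P : ProxADMM K)
    (α β : Fin K → ℝ)
    (hα : ∀ k, α k = P.ρ k * P.freq k / 2
      - (7 * P.L k / (2 * P.ρ k ^ 2) + 1 / P.ρ k) * ((P.Nb k).card : ℝ) * P.L k ^ 2
          * ((P.Td k : ℝ) + 1) ^ 2
      - ((P.Nb k).card : ℝ) * P.L k * (P.Td k : ℝ) ^ 2 / 2)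
    (hβ : ∀ k, β k = P.ρ k - 7 * P.L k)
    (hA3 : ∀ k, 0 < α k ∧ 0 < β k)
    (t : ℕ) (ht : 1 ≤ t) :
    P.Lag (P.x (t + 1)) (P.z (t + 1)) (P.y (t + 1))
        - P.Lag (P.x (t + 1)) (P.z (t + 1)) (P.y t)
      = ∑ k, (1 / P.ρ k) * ∑ j ∈ P.Nb k, ‖P.y (t + 1) k j - P.y t k j‖ ^ 2 ∧
    P.Lag (P.x (t + 1)) (P.z (t + 1)) (P.y (t + 1))
        - P.Lag (P.x (t + 1)) (P.z (t + 1)) (P.y t)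
      ≤ ∑ k, P.L k ^ 2 * ((P.Td k : ℝ) + 1) / P.ρ k *
          ∑ j ∈ P.Nb k, ∑ d ∈ Finset.range (P.Td k + 1),
            ‖P.z (t + 1 - d) j - P.z (t - d) j‖ ^ 2 := by
  -- The dual-update difference of the Lagrangian, termwise.
  have heq : P.Lag (P.x (t + 1)) (P.z (t + 1)) (P.y (t + 1))
      - P.Lag (P.x (t + 1)) (P.z (t + 1)) (P.y t)
      = ∑ k, (1 / P.ρ k) * ∑ j ∈ P.Nb k, ‖P.y (t + 1) k j - P.y t k j‖ ^ 2 := by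
    unfold ProxADMM.Lag
    rw [← Finset.sum_sub_distrib]
    refine Finset.sum_congr rfl fun k _ => ?_
    have hρ : P.ρ k ≠ 0 := (P.ρ_pos k).ne'
    have : - ∑ j ∈ P.Nb k, (P.y t k j * (P.x (t+1) k j - P.z (t+1) j)
          + P.ρ k / 2 * (P.x (t+1) k j - P.z (t+1) j) ^ 2)
        + ∑ j ∈ P.Nb k, (P.y (t+1) k j * (P.x (t+1) k j - P.z (t+1) j)
          + P.ρ k / 2 * (P.x (t+1) k j - P.z (t+1) j) ^ 2)
        = (1 / P.ρ k) * ∑ j ∈ P.Nb k, ‖P.y (t + 1) k j - P.y t k j‖ ^ 2 := by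
      rw [← Finset.sum_neg_distrib, Finset.mul_sum, ← Finset.sum_add_distrib]
      refine Finset.sum_congr rfl fun j hj => ?_
      have hy := P.y_update t k j hj
      rw [Real.norm_eq_abs, sq_abs, hy]
      field_simp
      ring
    linarith [this]
  refine ⟨heq, heq ▸ ?_⟩
  refine Finset.sum_le_sum fun k _ => ?_
  -- per node k
  obtain ⟨t', rfl⟩ : ∃ t', t = t' + 1 := ⟨t - 1, (Nat.succ_pred_eq_of_pos ht).symm⟩
  set t := t' + 1 with htdef
  set a := P.τ t k with ha
  set b := P.τ t' k with hb
  set v := restr (P.Nb k) (P.z a) with hv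
  set w := restr (P.Nb k) (P.z b) with hw
  set G := gradient (P.g k) w - gradient (P.g k) v with hG
  have ha1 : a ≤ t + 1 := P.τ_le t k
  have ha2 : t + 1 ≤ a + P.Td k := P.τ_ge t k
  have hb1 : b ≤ t := P.τ_le t' k
  have hb2 : t ≤ b + P.Td k := P.τ_ge t' k
  -- dual differences are gradient differences
  have hyd : ∀ j ∈ P.Nb k, P.y (t + 1) k j - P.y t k j = G j := by
    intro j hj
    have h1 := P.y_formula t k j hj
    have h2 := P.y_formula t' k j hj
    rw [h1, htdef, h2]
    show _ = (gradient (P.g k) w) j - (gradient (P.g k) v) j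
    ring
  -- coordinate bound via the Lipschitz gradient
  have hGle : ∑ j ∈ P.Nb k, ‖P.y (t + 1) k j - P.y t k j‖ ^ 2 ≤ ‖G‖ ^ 2 := by
    have : ∑ j ∈ P.Nb k, ‖P.y (t + 1) k j - P.y t k j‖ ^ 2 = ∑ j ∈ P.Nb k, ‖G j‖ ^ 2 := by
      refine Finset.sum_congr rfl fun j hj => ?_
      rw [hyd j hj]
    rw [this, EuclideanSpace.norm_eq, Real.sq_sqrt (by positivity)]
    exact Finset.sum_le_sum_of_subset_of_nonneg (Finset.subset_univ _)
      (fun i _ _ => by positivity)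
  have hlip : ‖G‖ ^ 2 ≤ P.L k ^ 2 * ‖w - v‖ ^ 2 := by
    have h1 := P.g_grad_lip k w v
    have h2 : ‖G‖ ^ 2 ≤ (P.L k * ‖w - v‖) ^ 2 :=
      pow_le_pow_left₀ (norm_nonneg _) h1 2
    calc ‖G‖ ^ 2 ≤ (P.L k * ‖w - v‖) ^ 2 := h2
      _ = P.L k ^ 2 * ‖w - v‖ ^ 2 := by ring
  -- the z-difference bound per coordinate
  have hcoord : ∀ j : Fin K, (P.z b j - P.z a j) ^ 2
      ≤ ((P.Td k : ℝ) + 1) * ∑ d ∈ Finset.range (P.Td k + 1),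
          (P.z (t + 1 - d) j - P.z (t - d) j) ^ 2 := by
    intro j
    set m := min a b with hm
    set M := max a b with hM
    have hmM : m ≤ M := min_le_max
    have hMle : M ≤ t + 1 := max_le ha1 (hb1.trans (Nat.le_succ t))
    have hmge : t ≤ m + P.Td k := by
      rcases min_choice a b with h | h <;> rw [hm, h] <;> omega
    have hsq : (P.z b j - P.z a j) ^ 2 = (P.z M j - P.z m j) ^ 2 := by
      rcases le_total a b with h | h
      · rw [hm, hM, min_eq_left h, max_eq_right h]
      · rw [hm, hM, min_eq_right h, max_eq_left h]; ring
    have htel : P.z M j - P.z m j = ∑ s ∈ Finset.Ico m M, (P.z (s + 1) j - P.z s j) := by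
      rw [sum_Ico_telescope (fun s => P.z s j) hmM]
    have hCS : (P.z M j - P.z m j) ^ 2
        ≤ (M - m : ℕ) * ∑ s ∈ Finset.Ico m M, (P.z (s + 1) j - P.z s j) ^ 2 := by
      rw [htel]
      have := sq_sum_le_card_mul_sum_sq
        (s := Finset.Ico m M) (f := fun s => P.z (s + 1) j - P.z s j)
      simpa [Nat.card_Ico] using this
    have hre : ∑ s ∈ Finset.Ico m M, (P.z (s + 1) j - P.z s j) ^ 2
        ≤ ∑ d ∈ Finset.range (P.Td k + 1), (P.z (t + 1 - d) j - P.z (t - d) j) ^ 2 := by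
      have hinj : ∀ x ∈ Finset.Ico m M, ∀ y ∈ Finset.Ico m M,
          t - x = t - y → x = y := by
        intro x hx y hy hxy
        simp only [Finset.mem_Ico] at hx hy
        omega
      have himg : ∑ d ∈ (Finset.Ico m M).image (fun s => t - s),
          (P.z (t + 1 - d) j - P.z (t - d) j) ^ 2
          = ∑ s ∈ Finset.Ico m M, (P.z (s + 1) j - P.z s j) ^ 2 := by
        rw [Finset.sum_image hinj]
        refine Finset.sum_congr rfl fun s hs => ?_
        simp only [Finset.mem_Ico] at hs
        have h1 : t + 1 - (t - s) = s + 1 := by omega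
        have h2 : t - (t - s) = s := by omega
        rw [h1, h2]
      rw [← himg]
      refine Finset.sum_le_sum_of_subset_of_nonneg ?_ (fun i _ _ => by positivity)
      intro d hd
      simp only [Finset.mem_image, Finset.mem_Ico] at hd
      obtain ⟨s, ⟨hs1, hs2⟩, rfl⟩ := hd
      simp only [Finset.mem_range]
      omega
    have hcard : ((M - m : ℕ) : ℝ) ≤ (P.Td k : ℝ) + 1 := by
      have : M - m ≤ P.Td k + 1 := by omega
      exact_mod_cast Nat.cast_le.mpr this |>.trans_eq (by push_cast; ring)
    calc (P.z b j - P.z a j) ^ 2 = (P.z M j - P.z m j) ^ 2 := hsq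
      _ ≤ (M - m : ℕ) * ∑ s ∈ Finset.Ico m M, (P.z (s + 1) j - P.z s j) ^ 2 := hCS
      _ ≤ ((P.Td k : ℝ) + 1) * ∑ d ∈ Finset.range (P.Td k + 1),
            (P.z (t + 1 - d) j - P.z (t - d) j) ^ 2 := by
          refine mul_le_mul hcard ?_ (by positivity) (by positivity)
          exact hre.trans (le_of_eq rfl)
  -- norm of w - v
  have hwv : ‖w - v‖ ^ 2 = ∑ j ∈ P.Nb k, (P.z b j - P.z a j) ^ 2 := by
    rw [EuclideanSpace.norm_eq, Real.sq_sqrt (by positivity)]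
    rw [← Finset.sum_subset (Finset.subset_univ (P.Nb k))]
    · refine Finset.sum_congr rfl fun j hj => ?_
      have : (w - v) j = P.z b j - P.z a j := by
        show w j - v j = _
        simp [hw, hv, restr, hj]
      rw [this, Real.norm_eq_abs, sq_abs]
    · intro j _ hj
      have : (w - v) j = 0 := by
        show w j - v j = 0
        simp [hw, hv, restr, hj]
      rw [this]; simp
  -- assemble
  have hfinal : ∑ j ∈ P.Nb k, ‖P.y (t + 1) k j - P.y t k j‖ ^ 2
      ≤ P.L k ^ 2 * ((P.Td k : ℝ) + 1) * ∑ j ∈ P.Nb k,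
          ∑ d ∈ Finset.range (P.Td k + 1), (P.z (t + 1 - d) j - P.z (t - d) j) ^ 2 := by
    calc ∑ j ∈ P.Nb k, ‖P.y (t + 1) k j - P.y t k j‖ ^ 2 ≤ ‖G‖ ^ 2 := hGle
      _ ≤ P.L k ^ 2 * ‖w - v‖ ^ 2 := hlip
      _ = P.L k ^ 2 * ∑ j ∈ P.Nb k, (P.z b j - P.z a j) ^ 2 := by rw [hwv]
      _ ≤ P.L k ^ 2 * (((P.Td k : ℝ) + 1) * ∑ j ∈ P.Nb k,
            ∑ d ∈ Finset.range (P.Td k + 1), (P.z (t + 1 - d) j - P.z (t - d) j) ^ 2) := by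
          refine mul_le_mul_of_nonneg_left ?_ (by positivity)
          rw [Finset.mul_sum]
          exact Finset.sum_le_sum fun j _ => hcoord j
      _ = _ := by ring
  have hρpos : (0:ℝ) < P.ρ k := P.ρ_pos k
  have : (1 / P.ρ k) * ∑ j ∈ P.Nb k, ‖P.y (t + 1) k j - P.y t k j‖ ^ 2
      ≤ (1 / P.ρ k) * (P.L k ^ 2 * ((P.Td k : ℝ) + 1) * ∑ j ∈ P.Nb k,
          ∑ d ∈ Finset.range (P.Td k + 1), (P.z (t + 1 - d) j - P.z (t - d) j) ^ 2) :=
    mul_le_mul_of_nonneg_left hfinal (by positivity)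
  calc (1 / P.ρ k) * ∑ j ∈ P.Nb k, ‖P.y (t + 1) k j - P.y t k j‖ ^ 2
      ≤ (1 / P.ρ k) * (P.L k ^ 2 * ((P.Td k : ℝ) + 1) * ∑ j ∈ P.Nb k,
          ∑ d ∈ Finset.range (P.Td k + 1), (P.z (t + 1 - d) j - P.z (t - d) j) ^ 2) := this
    _ = P.L k ^ 2 * ((P.Td k : ℝ) + 1) / P.ρ k * ∑ j ∈ P.Nb k,
          ∑ d ∈ Finset.range (P.Td k + 1), ‖P.z (t + 1 - d) j - P.z (t - d) j‖ ^ 2 := by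
        simp only [Real.norm_eq_abs, sq_abs]
        ring
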